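/- For every Maya diagram M and every integer k ≥ 1, the symmetric difference (M+k) ⊖ M is finite, its cardinality is at least k, and its cardinality is congruent to k modulo 2. Consequently, a Maya diagram can be transformed into its translate M+k by an odd number p of flips only if k is odd (when p and the number of flips have matching parity), and p ≥ k. -/

import Mathlib

private noncomputable def chg (M : Set ℤ) : ℤ :=
  ({m ∈ M | 0 ≤ m}.ncard : ℤ) - ({m : ℤ | m < 0 ∧ m ∉ M}.ncard : ℤ)

private def okM (M : Set ℤ) : Prop :=
  {m ∈ M | 0 ≤ m}.Finite ∧ {m : ℤ | m < 0 ∧ m ∉ M}.Finite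

private lemma inj1 : Function.Injective (fun x : ℤ => x + 1) :=
  fun a b h => by simpa using h

private lemma shift1 {M : Set ℤ} (h : okM M) :
    okM {m : ℤ | m - 1 ∈ M} ∧ chg {m : ℤ | m - 1 ∈ M} = chg M + 1 := by
  obtain ⟨h1, h2⟩ := h
  by_cases c1 : (-1 : ℤ) ∈ M
  · have hP : {m ∈ {m : ℤ | m - 1 ∈ M} | 0 ≤ m}
        = (fun x : ℤ => x + 1) '' insert (-1) {m ∈ M | 0 ≤ m} := by
      ext m
      simp only [Set.mem_sep_iff, Set.mem_setOf_eq, Set.mem_image, Set.mem_insert_iff]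
      constructor
      · rintro ⟨hm, h0⟩
        by_cases he : m - 1 = -1
        · exact ⟨m - 1, Or.inl he, by ring⟩
        · exact ⟨m - 1, Or.inr ⟨hm, by omega⟩, by ring⟩
      · rintro ⟨y, hy | ⟨hy, hy0⟩, rfl⟩
        · constructor
          · rw [show y + 1 - 1 = y by ring, hy]; exact c1
          · omega
        · exact ⟨by rwa [show y + 1 - 1 = y by ring], by omega⟩
    have hN : {m : ℤ | m < 0 ∧ m - 1 ∉ M}
        = (fun x : ℤ => x + 1) '' {m : ℤ | m < 0 ∧ m ∉ M} := by
      ext m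
      simp only [Set.mem_setOf_eq, Set.mem_image]
      constructor
      · rintro ⟨hm, hm2⟩
        exact ⟨m - 1, ⟨by omega, hm2⟩, by ring⟩
      · rintro ⟨y, ⟨hy, hy2⟩, rfl⟩
        have hne : y ≠ -1 := fun he => hy2 (he ▸ c1)
        exact ⟨by omega, by rwa [show y + 1 - 1 = y by ring]⟩
    have hPn : (-1:ℤ) ∉ {m ∈ M | 0 ≤ m} := fun hc => by have := hc.2; omega
    constructor
    · constructor
      · rw [hP]; exact ((h1.insert _).image _)
      · rw [show {m : ℤ | m < 0 ∧ m ∉ {m : ℤ | m - 1 ∈ M}} = {m : ℤ | m < 0 ∧ m - 1 ∉ M}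
          from rfl, hN]
        exact h2.image _
    · rw [chg, chg, show {m : ℤ | m < 0 ∧ m ∉ {m : ℤ | m - 1 ∈ M}} = {m : ℤ | m < 0 ∧ m - 1 ∉ M}
          from rfl, hP, hN, Set.ncard_image_of_injective _ inj1,
        Set.ncard_image_of_injective _ inj1, Set.ncard_insert_of_notMem hPn h1]
      push_cast
      ring
  · have hP : {m ∈ {m : ℤ | m - 1 ∈ M} | 0 ≤ m}
        = (fun x : ℤ => x + 1) '' {m ∈ M | 0 ≤ m} := by
      ext m
      simp only [Set.mem_sep_iff, Set.mem_setOf_eq, Set.mem_image]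
      constructor
      · rintro ⟨hm, h0⟩
        have hne : m - 1 ≠ -1 := fun he => c1 (he ▸ hm)
        exact ⟨m - 1, ⟨hm, by omega⟩, by ring⟩
      · rintro ⟨y, ⟨hy, hy0⟩, rfl⟩
        exact ⟨by rwa [show y + 1 - 1 = y by ring], by omega⟩
    have hN : {m : ℤ | m < 0 ∧ m - 1 ∉ M}
        = ((fun x : ℤ => x + 1) '' {m : ℤ | m < 0 ∧ m ∉ M}) \ {0} := by
      ext m
      simp only [Set.mem_setOf_eq, Set.mem_image, Set.mem_diff, Set.mem_singleton_iff]
      constructor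
      · rintro ⟨hm, hm2⟩
        exact ⟨⟨m - 1, ⟨by omega, hm2⟩, by ring⟩, by omega⟩
      · rintro ⟨⟨y, ⟨hy, hy2⟩, rfl⟩, h0⟩
        exact ⟨by omega, by rwa [show y + 1 - 1 = y by ring]⟩
    have h0mem : (0:ℤ) ∈ (fun x : ℤ => x + 1) '' {m : ℤ | m < 0 ∧ m ∉ M} :=
      ⟨-1, ⟨by omega, c1⟩, by ring⟩
    constructor
    · constructor
      · rw [hP]; exact h1.image _
      · rw [show {m : ℤ | m < 0 ∧ m ∉ {m : ℤ | m - 1 ∈ M}} = {m : ℤ | m < 0 ∧ m - 1 ∉ M}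
          from rfl, hN]
        exact ((h2.image _).diff)
    · have hc := Set.ncard_diff_singleton_add_one h0mem (h2.image _)
      rw [chg, chg, show {m : ℤ | m < 0 ∧ m ∉ {m : ℤ | m - 1 ∈ M}} = {m : ℤ | m < 0 ∧ m - 1 ∉ M}
          from rfl, hP, hN, Set.ncard_image_of_injective _ inj1]
      rw [Set.ncard_image_of_injective _ inj1] at hc
      omega
private lemma flip_chg {M : Set ℤ} (h : okM M) (x : ℤ) :
    chg (symmDiff M {x}) = chg M + 1 ∨ chg (symmDiff M {x}) = chg M - 1 := by
  obtain ⟨h1, h2⟩ := h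
  by_cases hx : x ∈ M <;> by_cases hx0 : (0:ℤ) ≤ x
  · -- x ∈ M, 0 ≤ x : positive part loses x
    right
    have hP : {m ∈ symmDiff M {x} | 0 ≤ m} = {m ∈ M | 0 ≤ m} \ {x} := by
      ext m
      by_cases hmx : m = x
      · subst hmx; simp [Set.mem_symmDiff, hx]
      · simp [Set.mem_symmDiff, hmx]
    have hN : {m : ℤ | m < 0 ∧ m ∉ symmDiff M {x}} = {m : ℤ | m < 0 ∧ m ∉ M} := by
      ext m
      by_cases hmx : m = x
      · subst hmx; simp [Set.mem_symmDiff, show ¬ (m < 0) by omega]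
      · simp [Set.mem_symmDiff, hmx]
    have hc := Set.ncard_diff_singleton_add_one (show x ∈ {m ∈ M | 0 ≤ m} from ⟨hx, hx0⟩) h1
    simp only [chg, hP, hN]
    omega
  · -- x ∈ M, x < 0 : negative part gains x
    right
    have hP : {m ∈ symmDiff M {x} | 0 ≤ m} = {m ∈ M | 0 ≤ m} := by
      ext m
      by_cases hmx : m = x
      · subst hmx; simp [Set.mem_symmDiff, hx, hx0]
      · simp [Set.mem_symmDiff, hmx]
    have hN : {m : ℤ | m < 0 ∧ m ∉ symmDiff M {x}} = insert x {m : ℤ | m < 0 ∧ m ∉ M} := by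
      ext m
      by_cases hmx : m = x
      · subst hmx; simp [Set.mem_symmDiff, hx, show m < 0 by omega]
      · simp [Set.mem_symmDiff, hmx]
    have hxN : x ∉ {m : ℤ | m < 0 ∧ m ∉ M} := fun hc => hc.2 hx
    have hc := Set.ncard_insert_of_notMem hxN h2
    simp only [chg, hP, hN]
    omega
  · -- x ∉ M, 0 ≤ x : positive part gains x
    left
    have hP : {m ∈ symmDiff M {x} | 0 ≤ m} = insert x {m ∈ M | 0 ≤ m} := by
      ext m
      by_cases hmx : m = x
      · subst hmx; simp [Set.mem_symmDiff, hx, hx0]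
      · simp [Set.mem_symmDiff, hmx]
    have hN : {m : ℤ | m < 0 ∧ m ∉ symmDiff M {x}} = {m : ℤ | m < 0 ∧ m ∉ M} := by
      ext m
      by_cases hmx : m = x
      · subst hmx; simp [Set.mem_symmDiff, show ¬ (m < 0) by omega]
      · simp [Set.mem_symmDiff, hmx]
    have hxP : x ∉ {m ∈ M | 0 ≤ m} := fun hc => hx hc.1
    have hc := Set.ncard_insert_of_notMem hxP h1
    simp only [chg, hP, hN]
    omega
  · -- x ∉ M, x < 0 : negative part loses x
    left
    have hP : {m ∈ symmDiff M {x} | 0 ≤ m} = {m ∈ M | 0 ≤ m} := by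
      ext m
      by_cases hmx : m = x
      · subst hmx; simp [Set.mem_symmDiff, hx0]
      · simp [Set.mem_symmDiff, hmx]
    have hN : {m : ℤ | m < 0 ∧ m ∉ symmDiff M {x}} = {m : ℤ | m < 0 ∧ m ∉ M} \ {x} := by
      ext m
      by_cases hmx : m = x
      · subst hmx; simp [Set.mem_symmDiff, hx, show m < 0 by omega]
      · simp [Set.mem_symmDiff, hmx]
    have hc := Set.ncard_diff_singleton_add_one
      (show x ∈ {m : ℤ | m < 0 ∧ m ∉ M} from ⟨by omega, hx⟩) h2
    simp only [chg, hP, hN]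
    omega

private lemma shiftk {M : Set ℤ} (h : okM M) (k : ℕ) :
    okM {m : ℤ | m - (k : ℤ) ∈ M} ∧ chg {m : ℤ | m - (k : ℤ) ∈ M} = chg M + k := by
  induction k with
  | zero =>
    have : {m : ℤ | m - ((0:ℕ) : ℤ) ∈ M} = M := by ext m; simp
    rw [this]; simpa using h
  | succ n ih =>
    have key : {m : ℤ | m - ((n + 1 : ℕ) : ℤ) ∈ M}
        = {m : ℤ | m - 1 ∈ {m : ℤ | m - (n : ℤ) ∈ M}} := by
      ext m
      simp only [Set.mem_setOf_eq]
      constructor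
      · intro hm; rwa [show m - 1 - (n:ℤ) = m - ((n+1:ℕ):ℤ) by push_cast; ring]
      · intro hm; rwa [show m - 1 - (n:ℤ) = m - ((n+1:ℕ):ℤ) by push_cast; ring] at hm
    obtain ⟨hok, hchg⟩ := ih
    obtain ⟨hok', hchg'⟩ := shift1 hok
    rw [key]
    refine ⟨hok', ?_⟩
    rw [hchg', hchg]
    push_cast
    ring

private lemma flip_ok {M : Set ℤ} (h : okM M) (x : ℤ) : okM (symmDiff M {x}) := by
  obtain ⟨h1, h2⟩ := h
  constructor
  · apply (h1.insert x).subset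
    intro m hm
    simp [Set.mem_symmDiff] at hm ⊢
    tauto
  · apply (h2.insert x).subset
    intro m hm
    simp [Set.mem_symmDiff] at hm ⊢
    tauto

private lemma fold_chg (μ : List ℤ) : ∀ (M : Set ℤ), okM M →
    okM (μ.foldl (fun S x => symmDiff S ({x} : Set ℤ)) M) ∧
    ∃ a b : ℕ, a + b = μ.length ∧
      chg (μ.foldl (fun S x => symmDiff S ({x} : Set ℤ)) M) = chg M + a - b := by
  induction μ with
  | nil => intro M h; exact ⟨h, 0, 0, rfl, by simp⟩
  | cons x xs ih =>
    intro M h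
    obtain ⟨hok, a, b, hab, hchg⟩ := ih (symmDiff M {x}) (flip_ok h x)
    refine ⟨hok, ?_⟩
    rcases flip_chg h x with hc | hc
    · refine ⟨a + 1, b, by simp [List.length_cons]; omega, ?_⟩
      rw [List.foldl_cons] at *
      rw [hchg, hc]; push_cast; ring
    · refine ⟨a, b + 1, by simp [List.length_cons]; omega, ?_⟩
      rw [List.foldl_cons] at *
      rw [hchg, hc]; push_cast; ring

private lemma fold_set (l : List ℤ) : ∀ (M : Set ℤ), l.Nodup →
    l.foldl (fun S x => symmDiff S ({x} : Set ℤ)) M = symmDiff M {x : ℤ | x ∈ l} := by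
  induction l with
  | nil =>
    intro M _
    have : {x : ℤ | x ∈ ([] : List ℤ)} = (⊥ : Set ℤ) := by ext y; simp
    rw [List.foldl_nil, this, symmDiff_bot]
  | cons x xs ih =>
    intro M hnd
    have hx : x ∉ xs := (List.nodup_cons.mp hnd).1
    rw [List.foldl_cons, ih _ (List.nodup_cons.mp hnd).2, symmDiff_assoc]
    congr 1
    ext y
    simp only [Set.mem_symmDiff, Set.mem_singleton_iff, Set.mem_setOf_eq, List.mem_cons]
    constructor
    · rintro (⟨rfl, _⟩ | ⟨h, _⟩)
      · exact Or.inl rfl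
      · exact Or.inr h
    · rintro (rfl | h)
      · exact Or.inl ⟨rfl, hx⟩
      · exact Or.inr ⟨h, fun he => hx (he ▸ h)⟩

/-- For every Maya diagram `M` and `k ≥ 1`, the symmetric difference
`(M+k) ⊖ M` is finite, has cardinality at least `k`, and its cardinality is congruent to
`k` mod 2.  Consequently, `M` can be transformed into `M+k` by an odd number `p` of flips
(flipping at `x` = symmetric difference with `{x}`) only if `k` is odd and `p ≥ k`. -/
theorem maya_flip_parity (M : Set ℤ)
    (h1 : {m ∈ M | 0 ≤ m}.Finite)
    (h2 : {m : ℤ | m < 0 ∧ m ∉ M}.Finite)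
    (k : ℕ) (hk : 1 ≤ k) :
    (symmDiff ((fun x => x + (k : ℤ)) '' M) M).Finite ∧
    k ≤ (symmDiff ((fun x => x + (k : ℤ)) '' M) M).ncard ∧
    (symmDiff ((fun x => x + (k : ℤ)) '' M) M).ncard % 2 = k % 2 ∧
    (∀ μ : List ℤ,
      μ.foldl (fun S x => symmDiff S ({x} : Set ℤ)) M = (fun x => x + (k : ℤ)) '' M →
      Odd μ.length → Odd k ∧ k ≤ μ.length) := by
  have hok : okM M := ⟨h1, h2⟩
  have himg : (fun x => x + (k : ℤ)) '' M = {m : ℤ | m - (k : ℤ) ∈ M} := by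
    ext m
    constructor
    · rintro ⟨y, hy, rfl⟩
      simpa using hy
    · intro hm
      exact ⟨m - (k : ℤ), hm, by ring⟩
  obtain ⟨hokk, hchgk⟩ := shiftk hok k
  -- the key consequence of the charge invariant
  have main : ∀ μ : List ℤ,
      μ.foldl (fun S x => symmDiff S ({x} : Set ℤ)) M = (fun x => x + (k : ℤ)) '' M →
      k ≤ μ.length ∧ μ.length % 2 = k % 2 := by
    intro μ hμ
    obtain ⟨_, a, b, hab, hchg⟩ := fold_chg μ M hok
    rw [hμ, himg, hchgk] at hchg
    omega
  -- finiteness of the symmetric difference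
  obtain ⟨U, hU⟩ := h1.bddAbove
  obtain ⟨L, hL⟩ := h2.bddBelow
  have hSfin : (symmDiff ((fun x => x + (k : ℤ)) '' M) M).Finite := by
    apply (Set.finite_Icc (min L 0) (max U 0 + k)).subset
    intro x hx
    rw [Set.mem_symmDiff, himg] at hx
    simp only [Set.mem_Icc]
    constructor
    · by_contra hlt
      push_neg at hlt
      have hxM : x ∈ M := by
        by_contra hxM
        have := hL (show x ∈ {m : ℤ | m < 0 ∧ m ∉ M} from ⟨by omega, hxM⟩)
        omega
      have hxA : x - (k : ℤ) ∈ M := by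
        by_contra hxkM
        have := hL (show x - (k:ℤ) ∈ {m : ℤ | m < 0 ∧ m ∉ M} from ⟨by omega, hxkM⟩)
        omega
      simp only [Set.mem_setOf_eq] at hx
      tauto
    · by_contra hgt
      push_neg at hgt
      have hxM : x ∉ M := by
        intro hxM
        have := hU (show x ∈ {m ∈ M | 0 ≤ m} from ⟨hxM, by omega⟩)
        omega
      have hxA : x - (k : ℤ) ∉ M := by
        intro hxkM
        have := hU (show x - (k:ℤ) ∈ {m ∈ M | 0 ≤ m} from ⟨hxkM, by omega⟩)
        omega
      simp only [Set.mem_setOf_eq] at hx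
      tauto
  refine ⟨hSfin, ?_, ?_, ?_⟩
  case _ | _ =>
    all_goals {
      have hl := Finset.nodup_toList hSfin.toFinset
      have hset : {x : ℤ | x ∈ hSfin.toFinset.toList}
          = symmDiff ((fun x => x + (k : ℤ)) '' M) M := by
        ext y; simp [Set.Finite.mem_toFinset]
      have hfold : hSfin.toFinset.toList.foldl (fun S x => symmDiff S ({x} : Set ℤ)) M
          = (fun x => x + (k : ℤ)) '' M := by
        rw [fold_set _ _ hl, hset, symmDiff_comm ((fun x => x + (k : ℤ)) '' M) M,
          symmDiff_symmDiff_cancel_left]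
      have hlen : hSfin.toFinset.toList.length
          = (symmDiff ((fun x => x + (k : ℤ)) '' M) M).ncard := by
        rw [Finset.length_toList, Set.ncard_eq_toFinset_card _ hSfin]
      obtain ⟨hle, hpar⟩ := main _ hfold
      omega
    }
  · intro μ hμ hodd
    obtain ⟨hle, hpar⟩ := main μ hμ
    rw [Nat.odd_iff] at hodd ⊢
    omega
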